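/- Let D ⊆ ℝ² be a closed set that is downward closed with respect to the componentwise partial order (i.e., if q ∈ D and q'.1 ≤ q.1 and q'.2 ≤ q.2 then q' ∈ D). Then for every closed axis-aligned rectangle R = [a,b]×[c,d] (with a ≤ b, c ≤ d), the set frontier(D) ∩ R is preconnected. -/

import Mathlib

open Set

/-- A point strictly below a point of a downward-closed set is in the interior. -/
lemma aux_mem_interior_of_lt {D : Set (ℝ × ℝ)}
    (hdown : ∀ q ∈ D, ∀ q' : ℝ × ℝ, q'.1 ≤ q.1 → q'.2 ≤ q.2 → q' ∈ D)
    {r s : ℝ × ℝ} (hr : r ∈ D) (h1 : s.1 < r.1) (h2 : s.2 < r.2) : s ∈ interior D := by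
  have hsub : (Iio r.1 ×ˢ Iio r.2 : Set (ℝ × ℝ)) ⊆ D := by
    rintro ⟨x, y⟩ ⟨hx, hy⟩
    exact hdown r hr (x, y) (le_of_lt hx) (le_of_lt hy)
  exact interior_maximal hsub (isOpen_Iio.prod isOpen_Iio) ⟨h1, h2⟩

/-- Comparison lemma on the frontier of a closed downward-closed set. -/
lemma aux_frontier_comp {D : Set (ℝ × ℝ)} (hDclosed : IsClosed D)
    (hdown : ∀ q ∈ D, ∀ q' : ℝ × ℝ, q'.1 ≤ q.1 → q'.2 ≤ q.2 → q' ∈ D)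
    {p q : ℝ × ℝ} (hp : p ∈ frontier D) (hq : q ∈ frontier D)
    (h : p.1 - p.2 ≤ q.1 - q.2) : p.1 ≤ q.1 ∧ q.2 ≤ p.2 := by
  have hpD : p ∈ D := hDclosed.frontier_subset hp
  have hqD : q ∈ D := hDclosed.frontier_subset hq
  constructor
  · by_contra hlt
    push_neg at hlt
    have h2 : q.2 < p.2 := by linarith
    exact hq.2 (aux_mem_interior_of_lt hdown hpD hlt h2)
  · by_contra hlt
    push_neg at hlt
    have h1 : p.1 < q.1 := by linarith
    exact hp.2 (aux_mem_interior_of_lt hdown hqD h1 hlt)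

/-- Surjectivity of the anti-diagonal slice onto the interval. -/
lemma aux_exists_frontier_point {D : Set (ℝ × ℝ)} (hDclosed : IsClosed D)
    (hdown : ∀ q ∈ D, ∀ q' : ℝ × ℝ, q'.1 ≤ q.1 → q'.2 ≤ q.2 → q' ∈ D)
    {a b c d : ℝ} {p q : ℝ × ℝ}
    (hp : p ∈ frontier D ∩ (Icc a b ×ˢ Icc c d))
    (hq : q ∈ frontier D ∩ (Icc a b ×ˢ Icc c d))
    {u : ℝ} (hu1 : p.1 - p.2 ≤ u) (hu2 : u ≤ q.1 - q.2) :
    ∃ r ∈ frontier D ∩ (Icc a b ×ˢ Icc c d), r.1 - r.2 = u := by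
  have hpF := hp.1
  have hqF := hq.1
  have hpD : p ∈ D := hDclosed.frontier_subset hpF
  have hqD : q ∈ D := hDclosed.frontier_subset hqF
  set M : Set ℝ := {t | ((t, t - u) : ℝ × ℝ) ∈ D} with hM
  have hMne : (min p.1 (p.2 + u)) ∈ M := by
    refine hdown p hpD _ (min_le_left _ _) ?_
    simp only
    have := min_le_right p.1 (p.2 + u)
    linarith
  have hMbdd : M ⊆ Iic (max q.1 (q.2 + u)) := by
    intro t ht
    by_contra hgt
    simp only [mem_Iic, not_le] at hgt
    have h1 : q.1 < t := lt_of_le_of_lt (le_max_left _ _) hgt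
    have h2 : q.2 < t - u := by
      have := le_max_right q.1 (q.2 + u)
      linarith [lt_of_le_of_lt (le_max_right q.1 (q.2 + u)) hgt]
    exact hqF.2 (aux_mem_interior_of_lt hdown ht h1 h2)
  have hMclosed : IsClosed M := by
    have : M = (fun t : ℝ => ((t, t - u) : ℝ × ℝ)) ⁻¹' D := rfl
    rw [this]
    exact hDclosed.preimage (by continuity)
  have hbdd : BddAbove M := ⟨max q.1 (q.2 + u), fun t ht => hMbdd ht⟩
  set t₀ : ℝ := sSup M with ht₀
  have htM : t₀ ∈ M := hMclosed.csSup_mem ⟨_, hMne⟩ hbdd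
  set r : ℝ × ℝ := (t₀, t₀ - u) with hr
  have hrD : r ∈ D := htM
  have hrNotInt : r ∉ interior D := by
    intro hint
    obtain ⟨ε, hε, hball⟩ := Metric.isOpen_iff.1 isOpen_interior r hint
    have hmem : ((t₀ + ε / 2, t₀ + ε / 2 - u) : ℝ × ℝ) ∈ D := by
      apply interior_subset
      apply hball
      rw [Metric.mem_ball, Prod.dist_eq]
      simp only [Real.dist_eq]
      have h1 : |t₀ + ε / 2 - t₀| = ε / 2 := by rw [abs_of_nonneg] <;> linarith
      have h2 : |t₀ + ε / 2 - u - (t₀ - u)| = ε / 2 := by rw [abs_of_nonneg] <;> linarith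
      show max |t₀ + ε / 2 - t₀| |t₀ + ε / 2 - u - (t₀ - u)| < ε
      simp only [h1, h2, max_self]
      linarith
    have : t₀ + ε / 2 ≤ t₀ := le_csSup hbdd hmem
    linarith
  have hrF : r ∈ frontier D := by
    rw [frontier, hDclosed.closure_eq]
    exact ⟨hrD, hrNotInt⟩
  have hru : r.1 - r.2 = u := by simp [hr]
  have hc1 := aux_frontier_comp hDclosed hdown hpF hrF (by rw [hru]; exact hu1)
  have hc2 := aux_frontier_comp hDclosed hdown hrF hqF (by rw [hru]; exact hu2)
  refine ⟨r, ⟨hrF, ⟨⟨?_, ?_⟩, ?_, ?_⟩⟩, hru⟩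
  · exact le_trans hp.2.1.1 hc1.1
  · exact le_trans hc2.1 hq.2.1.2
  · exact le_trans hq.2.2.1 hc2.2
  · exact le_trans hc1.2 hp.2.2.2

/-- The frontier of a closed, downward-closed set in ℝ² intersects any
closed axis-aligned rectangle in a preconnected set. -/
theorem frontier_downward_closed_inter_rect_preconnected
    (D : Set (ℝ × ℝ)) (hDclosed : IsClosed D)
    (hdown : ∀ q ∈ D, ∀ q' : ℝ × ℝ, q'.1 ≤ q.1 → q'.2 ≤ q.2 → q' ∈ D)
    (a b c d : ℝ) (hab : a ≤ b) (hcd : c ≤ d) :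
    IsPreconnected (frontier D ∩ (Icc a b ×ˢ Icc c d)) := by
  set S : Set (ℝ × ℝ) := frontier D ∩ (Icc a b ×ˢ Icc c d) with hS
  set φ : ℝ × ℝ → ℝ := fun p => p.1 - p.2 with hφ
  set T : Set ℝ := φ '' S with hT
  -- injectivity of φ on S
  have hinj : InjOn φ S := by
    intro x hx y hy hxy
    have h1 := aux_frontier_comp hDclosed hdown hx.1 hy.1 (le_of_eq hxy)
    have h2 := aux_frontier_comp hDclosed hdown hy.1 hx.1 (le_of_eq hxy.symm)
    exact Prod.ext (le_antisymm h1.1 h2.1) (le_antisymm h2.2 h1.2)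
  set ψ : ℝ → ℝ × ℝ := Function.invFunOn φ S with hψ
  have hψmem : ∀ u ∈ T, ψ u ∈ S ∧ φ (ψ u) = u := by
    intro u hu
    obtain ⟨s, hs, rfl⟩ := hu
    exact ⟨Function.invFunOn_mem ⟨s, hs, rfl⟩, Function.invFunOn_eq ⟨s, hs, rfl⟩⟩
  -- key Lipschitz estimate for the inverse coordinates
  have key : ∀ u ∈ T, ∀ v ∈ T, u ≤ v →
      0 ≤ (ψ v).1 - (ψ u).1 ∧ (ψ v).1 - (ψ u).1 ≤ v - u ∧
      0 ≤ (ψ u).2 - (ψ v).2 ∧ (ψ u).2 - (ψ v).2 ≤ v - u := by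
    intro u hu v hv huv
    obtain ⟨hmu, hfu⟩ := hψmem u hu
    obtain ⟨hmv, hfv⟩ := hψmem v hv
    have hu' : (ψ u).1 - (ψ u).2 = u := hfu
    have hv' : (ψ v).1 - (ψ v).2 = v := hfv
    have hcomp := aux_frontier_comp hDclosed hdown hmu.1 hmv.1 (by rw [hu', hv']; exact huv)
    refine ⟨by linarith [hcomp.1], by linarith [hcomp.2], by linarith [hcomp.2],
      by linarith [hcomp.1]⟩
  have hlip1 : LipschitzOnWith 1 (fun u => (ψ u).1) T := by
    rw [lipschitzOnWith_iff_dist_le_mul]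
    intro u hu v hv
    simp only [Real.dist_eq, NNReal.coe_one, one_mul]
    rcases le_total u v with h | h
    · have := key u hu v hv h
      rw [abs_sub_comm, abs_of_nonneg this.1, abs_sub_comm, abs_of_nonneg (by linarith)]
      linarith [this.2.1]
    · have := key v hv u hu h
      rw [abs_of_nonneg this.1, abs_of_nonneg (by linarith)]
      linarith [this.2.1]
  have hlip2 : LipschitzOnWith 1 (fun u => (ψ u).2) T := by
    rw [lipschitzOnWith_iff_dist_le_mul]
    intro u hu v hv
    simp only [Real.dist_eq, NNReal.coe_one, one_mul]
    rcases le_total u v with h | h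
    · have := key u hu v hv h
      rw [abs_of_nonneg this.2.2.1, abs_sub_comm, abs_of_nonneg (by linarith)]
      linarith [this.2.2.2]
    · have := key v hv u hu h
      rw [abs_sub_comm, abs_of_nonneg this.2.2.1, abs_of_nonneg (by linarith)]
      linarith [this.2.2.2]
  obtain ⟨g₁, hg₁lip, hg₁eq⟩ := hlip1.extend_real
  obtain ⟨g₂, hg₂lip, hg₂eq⟩ := hlip2.extend_real
  set F : ℝ → ℝ × ℝ := fun u => (g₁ u, g₂ u) with hF
  have hFcont : Continuous F := hg₁lip.continuous.prodMk hg₂lip.continuous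
  have hFψ : ∀ u ∈ T, F u = ψ u := by
    intro u hu
    rw [hF]
    exact Prod.ext (hg₁eq hu).symm (hg₂eq hu).symm
  -- T is order-connected
  have hTord : OrdConnected T := by
    constructor
    rintro x ⟨px, hpx, rfl⟩ y ⟨py, hpy, rfl⟩ z hz
    obtain ⟨r, hr, hru⟩ := aux_exists_frontier_point hDclosed hdown hpx hpy hz.1 hz.2
    exact ⟨r, hr, hru⟩
  have hTpre : IsPreconnected T := hTord.isPreconnected
  -- S = F '' T
  have hSim : S = F '' T := by
    apply Subset.antisymm
    · intro s hs
      have hu : φ s ∈ T := ⟨s, hs, rfl⟩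
      refine ⟨φ s, hu, ?_⟩
      rw [hFψ _ hu]
      exact hinj (hψmem _ hu).1 hs ((hψmem _ hu).2)
    · rintro _ ⟨u, hu, rfl⟩
      rw [hFψ _ hu]
      exact (hψmem _ hu).1
  rw [hSim]
  exact hTpre.image F hFcont.continuousOn
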